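/- Let C ⊆ F₂^m be a code, i ∈ {1,...,m}, and q = del_i : C → D = q(C) the map deleting the i-th coordinate. Then q is a monomial isomorphism (i.e., q is bijective and both q and q⁻¹ are monomial maps) if and only if neuron i is redundant or constant zero in C, where neuron i is redundant means: not all words of C have 0 in position i, and there exists α ⊆ {1,...,m} with i ∉ α and Tk_i(C) = Tk_α(C); and constant zero means every word of C has 0 in position i. -/
import Mathlib


/-- The trunk of a code `C`, as a subset of `C`, determined by `α`. -/
def trunkIn {n : ℕ} (C : Set (Fin n → ZMod 2)) (α : Set (Fin n)) : Set ↥C :=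
  {w : ↥C | ∀ i ∈ α, w.1 i = 1}

/-- A code map `q : C → D` is monomial if the preimage of every simple trunk of
`D` is a trunk of `C` or empty. -/
def IsMonomialMap {n m : ℕ} {C : Set (Fin n → ZMod 2)} {D : Set (Fin m → ZMod 2)}
    (q : ↥C → ↥D) : Prop :=
  ∀ j : Fin m,
    (∃ α : Set (Fin n), q ⁻¹' trunkIn D {j} = trunkIn C α) ∨
    q ⁻¹' trunkIn D {j} = ∅

/-- `q` is a monomial isomorphism if it is a bijection, it is monomial, and its
inverse is monomial. -/
def IsMonomialIso {n m : ℕ} {C : Set (Fin n → ZMod 2)} {D : Set (Fin m → ZMod 2)}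
    (q : ↥C → ↥D) : Prop :=
  IsMonomialMap q ∧
  ∃ p : ↥D → ↥C, Function.LeftInverse p q ∧ Function.RightInverse p q ∧
    IsMonomialMap p

/-- Neuron `i` is redundant (to some `α` not containing `i`). -/
def Redundant {m : ℕ} (C : Set (Fin m → ZMod 2)) (i : Fin m) : Prop :=
  (¬ ∀ w ∈ C, w i = 0) ∧
  ∃ α : Set (Fin m), i ∉ α ∧ trunkIn C {i} = trunkIn C α

section aux

variable {m : ℕ} (C : Set (Fin (m + 1) → ZMod 2)) (i : Fin (m + 1))

/-- The deletion map. -/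
def delMap : ↥C → ↥((fun w => w ∘ i.succAbove) '' C) :=
  fun w => ⟨w.1 ∘ i.succAbove, ⟨w.1, w.2, rfl⟩⟩

lemma delMap_surj : Function.Surjective (delMap C i) := by
  rintro ⟨v, w, hw, rfl⟩
  exact ⟨⟨w, hw⟩, rfl⟩

lemma zmod2_cases (x : ZMod 2) : x = 0 ∨ x = 1 := by revert x; decide

lemma delMap_mono : IsMonomialMap (delMap C i) := by
  intro k
  left
  refine ⟨{i.succAbove k}, ?_⟩
  ext w
  simp [trunkIn, delMap, Set.mem_preimage]

lemma image_trunk (α : Set (Fin (m + 1))) (hi : i ∉ α) :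
    delMap C i '' trunkIn C α
      = trunkIn ((fun w => w ∘ i.succAbove) '' C) {k | i.succAbove k ∈ α} := by
  ext v
  constructor
  · rintro ⟨w, hw, rfl⟩ k hk
    exact hw _ hk
  · intro hv
    obtain ⟨w, rfl⟩ := delMap_surj C i v
    refine ⟨w, ?_, rfl⟩
    intro j hj
    have hji : j ≠ i := fun h => hi (h ▸ hj)
    obtain ⟨k, rfl⟩ := Fin.exists_succAbove_eq hji
    exact hv k hj

lemma delMap_inj_of (h : Redundant C i ∨ ∀ w ∈ C, w i = 0) :
    Function.Injective (delMap C i) := by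
  intro w w' hww
  have hoff : ∀ j, j ≠ i → w.1 j = w'.1 j := by
    intro j hj
    obtain ⟨k, rfl⟩ := Fin.exists_succAbove_eq hj
    exact congrFun (congrArg Subtype.val hww) k
  have hii : w.1 i = w'.1 i := by
    rcases h with ⟨_, α, hiα, hα⟩ | hz
    · have key : ∀ u u' : ↥C, (∀ j, j ≠ i → u.1 j = u'.1 j) → u.1 i = 1 → u'.1 i = 1 := by
        intro u u' huu hu
        have hu1 : u ∈ trunkIn C {i} := by
          intro j hj
          rw [Set.mem_singleton_iff] at hj
          rw [hj]; exact hu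
        rw [hα] at hu1
        have hu2 : u' ∈ trunkIn C α := by
          intro j hj
          rw [← huu j (fun h => hiα (h ▸ hj))]
          exact hu1 j hj
        rw [← hα] at hu2
        exact hu2 i rfl
      rcases zmod2_cases (w.1 i) with h1 | h1 <;> rcases zmod2_cases (w'.1 i) with h2 | h2
      · rw [h1, h2]
      · exact absurd (key w' w (fun j hj => (hoff j hj).symm) h2) (by rw [h1]; decide)
      · exact absurd (key w w' hoff h1) (by rw [h2]; decide)
      · rw [h1, h2]
    · rw [hz w.1 w.2, hz w'.1 w'.2]
  refine Subtype.ext (funext fun j => ?_)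
  by_cases hj : j = i
  · rw [hj]; exact hii
  · exact hoff j hj

end aux

/-- deleting the `i`-th neuron is a monomial isomorphism onto its
image iff neuron `i` is redundant or constant zero. -/
theorem stmt_18 {m : ℕ} (C : Set (Fin (m + 1) → ZMod 2)) (i : Fin (m + 1)) :
    IsMonomialIso
      (fun w : ↥C =>
        (⟨w.1 ∘ i.succAbove, ⟨w.1, w.2, rfl⟩⟩ :
          ↥((fun w => w ∘ i.succAbove) '' C))) ↔
    (Redundant C i ∨ ∀ w ∈ C, w i = 0) := by
  show IsMonomialIso (delMap C i) ↔ _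
  constructor
  · rintro ⟨_, p, hpl, hpr, hpmono⟩
    have hinj : Function.Injective (delMap C i) := hpl.injective
    by_cases hz : ∀ w ∈ C, w i = 0
    · exact Or.inr hz
    refine Or.inl ⟨hz, ?_⟩
    -- p ⁻¹' S = delMap '' S
    have himg : ∀ S : Set ↥C, p ⁻¹' S = delMap C i '' S := by
      intro S
      ext v
      constructor
      · intro h
        exact ⟨p v, h, hpr v⟩
      · rintro ⟨w, hw, rfl⟩
        show p (delMap C i w) ∈ S
        rw [hpl w]; exact hw
    -- trunk at i is nonempty
    push_neg at hz
    obtain ⟨w, hwC, hwi⟩ := hz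
    have hw1 : w i = 1 := (zmod2_cases (w i)).resolve_left hwi
    have hne : (⟨w, hwC⟩ : ↥C) ∈ trunkIn C {i} := by
      intro j hj
      rw [Set.mem_singleton_iff] at hj
      rw [hj]; exact hw1
    rcases hpmono i with ⟨α', hα'⟩ | hα'
    · rw [himg] at hα'
      refine ⟨i.succAbove '' α', ?_, ?_⟩
      · rintro ⟨k, _, hk⟩
        exact i.succAbove_ne k hk
      · ext u
        constructor
        · intro hu
          rintro j ⟨k, hk, rfl⟩
          have : delMap C i u ∈ trunkIn _ α' := hα' ▸ ⟨u, hu, rfl⟩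
          exact this k hk
        · intro hu
          have h1 : delMap C i u ∈ trunkIn _ α' := by
            intro k hk
            exact hu (i.succAbove k) ⟨k, hk, rfl⟩
          rw [← hα'] at h1
          obtain ⟨u', hu', heq⟩ := h1
          rwa [hinj heq] at hu'
    · exfalso
      rw [himg] at hα'
      have : delMap C i ⟨w, hwC⟩ ∈ (∅ : Set _) := hα' ▸ ⟨⟨w, hwC⟩, hne, rfl⟩
      exact this
  · intro h
    have hinj := delMap_inj_of C i h
    have hbij : Function.Bijective (delMap C i) := ⟨hinj, delMap_surj C i⟩
    let e := Equiv.ofBijective _ hbij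
    refine ⟨delMap_mono C i, e.symm, e.left_inv, e.right_inv, ?_⟩
    have himg : ∀ S : Set ↥C, e.symm ⁻¹' S = delMap C i '' S := by
      intro S
      ext v
      constructor
      · intro hv
        exact ⟨e.symm v, hv, e.apply_symm_apply v⟩
      · rintro ⟨u, hu, rfl⟩
        show e.symm (e u) ∈ S
        rw [e.symm_apply_apply]; exact hu
    intro j
    by_cases hji : j = i
    · rw [hji]
      rcases h with ⟨_, α, hiα, hα⟩ | hz
      · left
        refine ⟨{k | i.succAbove k ∈ α}, ?_⟩
        rw [himg, hα, image_trunk C i α hiα]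
      · right
        rw [himg]
        have h2 : trunkIn C {i} = ∅ := by
          ext u
          simp only [Set.mem_empty_iff_false, iff_false]
          intro hu
          have h1 := hu i rfl
          have h0 := hz u.1 u.2
          rw [h0] at h1
          exact absurd h1 (by decide)
        rw [h2, Set.image_empty]
    · left
      refine ⟨{k | i.succAbove k ∈ ({j} : Set (Fin (m + 1)))}, ?_⟩
      rw [himg, ← image_trunk C i {j} (fun hh => hji (Set.mem_singleton_iff.mp hh).symm)]
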